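/- Let G be a finite simple graph with arboricity at most α, let 0 < ε ≤ 1, and set Δ = 5(5/ε + 1)·2α. Let V_high be the vertices of degree at least Δ, let V_in ⊆ V_high be the vertices with at least 2Δ/5 neighbors inside V_high, and let V_out = V_high \ V_in. Then |V_in| ≤ (ε/10)·|V_out|. -/

import Mathlib

open Finset SimpleGraph

lemma sum_nbr_eq_twice_edges {V : Type*} [Fintype V] [DecidableEq V]
    (G : SimpleGraph V) [DecidableRel G.Adj] (S : Finset V) :
    ∑ v ∈ S, (G.neighborFinset v ∩ S).card
      = 2 * (G.edgeFinset.filter fun e => ∀ v ∈ e, v ∈ S).card := by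
  classical
  set D : Finset G.Dart := univ.filter fun d => d.fst ∈ S ∧ d.snd ∈ S with hD
  have h1 : D.card = ∑ v ∈ S, (G.neighborFinset v ∩ S).card := by
    rw [card_eq_sum_card_fiberwise (f := fun d : G.Dart => d.fst) (t := S)
      (fun d hd => (mem_filter.1 hd).2.1)]
    refine sum_congr rfl fun v hv => ?_
    refine card_bij (fun d _ => d.snd) ?_ ?_ ?_
    · rintro d hd
      simp only [hD, mem_filter, mem_univ, true_and] at hd
      obtain ⟨⟨h1, h2⟩, h3⟩ := hd
      rw [mem_inter, mem_neighborFinset]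
      exact ⟨h3 ▸ d.adj, h2⟩
    · rintro d1 hd1 d2 hd2 h
      simp only [hD, mem_filter, mem_univ, true_and] at hd1 hd2
      exact Dart.ext _ _ (Prod.ext (hd1.2.trans hd2.2.symm) h)
    · intro w hw
      rw [mem_inter, mem_neighborFinset] at hw
      exact ⟨⟨(v, w), hw.1⟩, by simp [hD, hw.2, hv], rfl⟩
  have h2 : D.card = 2 * (G.edgeFinset.filter fun e => ∀ v ∈ e, v ∈ S).card := by
    rw [card_eq_sum_card_fiberwise (f := fun d : G.Dart => d.edge)
      (t := G.edgeFinset.filter fun e => ∀ v ∈ e, v ∈ S) ?memb]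
    · rw [mul_comm, sum_const_nat]
      intro e he
      rw [mem_filter, mem_edgeFinset] at he
      rw [← G.dart_edge_fiber_card e he.1]
      congr 1
      ext d
      simp only [hD, mem_filter, mem_univ, true_and, and_iff_right_iff_imp]
      intro hde
      constructor
      · exact he.2 d.fst (by rw [← hde, Dart.edge_mk]; exact Sym2.mem_mk_left _ _)
      · exact he.2 d.snd (by rw [← hde, Dart.edge_mk]; exact Sym2.mem_mk_right _ _)
    case memb =>
      rintro ⟨⟨a, b⟩, hab⟩ hd
      simp only [hD, mem_coe, mem_filter, mem_univ, true_and] at hd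
      rw [mem_coe, mem_filter, mem_edgeFinset]
      refine ⟨Dart.edge_mem _, ?_⟩
      intro v hv
      simp only [Dart.edge, Sym2.mem_iff] at hv
      rcases hv with rfl | rfl
      exacts [hd.1, hd.2]
  omega


theorem stmt_12 {V : Type*} [Fintype V] [DecidableEq V]
    (G : SimpleGraph V) [DecidableRel G.Adj]
    (α ε Δ : ℝ) (hα : 1 ≤ α) (hε0 : 0 < ε) (hε1 : ε ≤ 1)
    (hΔ : Δ = 5 * (5 / ε + 1) * (2 * α))
    -- arboricity at most α
    (harb : ∀ S : Finset V, 2 ≤ S.card →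
      ((G.edgeFinset.filter fun e => ∀ v ∈ e, v ∈ S).card : ℝ) ≤ α * ((S.card : ℝ) - 1))
    (Vhigh Vin Vout : Finset V)
    (hhigh : Vhigh = Finset.univ.filter fun v => Δ ≤ (G.degree v : ℝ))
    (hin : Vin = Vhigh.filter fun v => 2 * Δ / 5 ≤ ((G.neighborFinset v ∩ Vhigh).card : ℝ))
    (hout : Vout = Vhigh \ Vin) :
    (Vin.card : ℝ) ≤ ε / 10 * (Vout.card : ℝ) := by
  classical
  by_cases hVin : Vin = ∅
  · rw [hVin]
    simp only [Finset.card_empty, Nat.cast_zero]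
    positivity
  obtain ⟨v, hv⟩ := Finset.nonempty_iff_ne_empty.2 hVin
  have h5ε : 5 ≤ 5 / ε := by
    rw [le_div_iff₀ hε0]; nlinarith
  have hΔpos : 0 < Δ := by rw [hΔ]; nlinarith
  have hvmem := hin ▸ hv
  rw [mem_filter] at hvmem
  obtain ⟨hvh, hnbr⟩ := hvmem
  have hposcard : 0 < (G.neighborFinset v ∩ Vhigh).card := by
    have : (0 : ℝ) < ((G.neighborFinset v ∩ Vhigh).card : ℝ) :=
      lt_of_lt_of_le (by positivity) hnbr
    exact_mod_cast this
  obtain ⟨w, hw⟩ := Finset.card_pos.1 hposcard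
  rw [Finset.mem_inter, SimpleGraph.mem_neighborFinset] at hw
  have h2 : 2 ≤ Vhigh.card :=
    Finset.one_lt_card.2 ⟨v, hvh, w, hw.2, G.ne_of_adj hw.1⟩
  have hE := harb Vhigh h2
  have hsub : Vin ⊆ Vhigh := by rw [hin]; exact Finset.filter_subset _ _
  have hsum : (∑ u ∈ Vhigh, ((G.neighborFinset u ∩ Vhigh).card : ℝ))
      = 2 * ((G.edgeFinset.filter fun e => ∀ x ∈ e, x ∈ Vhigh).card : ℝ) := by
    have := sum_nbr_eq_twice_edges G Vhigh
    exact_mod_cast congrArg (Nat.cast : ℕ → ℝ) this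
  have hlow : (Vin.card : ℝ) * (2 * Δ / 5)
      ≤ ∑ u ∈ Vhigh, ((G.neighborFinset u ∩ Vhigh).card : ℝ) := by
    calc (Vin.card : ℝ) * (2 * Δ / 5) = ∑ _u ∈ Vin, (2 * Δ / 5) := by
          rw [Finset.sum_const, nsmul_eq_mul]
      _ ≤ ∑ u ∈ Vin, ((G.neighborFinset u ∩ Vhigh).card : ℝ) := by
          refine Finset.sum_le_sum fun u hu => ?_
          have := hin ▸ hu
          rw [Finset.mem_filter] at this
          exact this.2
      _ ≤ _ := Finset.sum_le_sum_of_subset_of_nonneg hsub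
          (fun u _ _ => by positivity)
  have hcard : (Vhigh.card : ℝ) = Vin.card + Vout.card := by
    rw [hout]
    have h1 := Finset.card_sdiff_of_subset hsub
    have h2 := Finset.card_le_card hsub
    push_cast [h1]
    rw [Nat.cast_sub h2]
    ring
  have hεinv : ε * (5 / ε) = 5 := by field_simp
  have ha : (0 : ℝ) ≤ (Vin.card : ℝ) := Nat.cast_nonneg _
  have hb : (0 : ℝ) ≤ (Vout.card : ℝ) := Nat.cast_nonneg _
  have hEnn : (0 : ℝ) ≤ ((G.edgeFinset.filter fun e => ∀ x ∈ e, x ∈ Vhigh).card : ℝ) :=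
    Nat.cast_nonneg _
  have key : (Vin.card : ℝ) * (2 * Δ / 5) ≤ 2 * α * ((Vin.card : ℝ) + Vout.card) := by
    have := hlow.trans (hsum.le.trans (by nlinarith))
    nlinarith
  rw [hΔ] at key
  have hαpos : 0 < α := by linarith
  have hA : (Vin.card : ℝ) * (ε * (5 / ε)) = (Vin.card : ℝ) * 5 := by rw [hεinv]
  have hgoal : 10 * (Vin.card : ℝ) ≤ ε * (Vout.card : ℝ) := by
    nlinarith [mul_le_mul_of_nonneg_left key hε0.le, hA, hαpos,
      mul_nonneg (mul_nonneg hε0.le ha) hαpos.le, hb, ha]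
  linarith
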